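/- Let λ be a composition, I a nonempty subset of {1,…,n}, and i ∈ I. If I is not comaximal with respect to λ, then the rational function r_I^{(i)} vanishes at z = λ̄, i.e. r_I^{(i)}(λ̄) = 0, whenever this evaluation is defined (no denominator of r_I^{(i)} vanishes at λ̄). -/

import Mathlib

open scoped BigOperators Classical

noncomputable section

/-- The ground field `F = ℚ(q,t)`. -/
abbrev F : Type := FractionRing (MvPolynomial (Fin 2) ℚ)

/-- The indeterminate `q` of `F = ℚ(q,t)`. -/
def q : F := algebraMap (MvPolynomial (Fin 2) ℚ) F (MvPolynomial.X 0)

/-- The indeterminate `t` of `F = ℚ(q,t)`. -/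
def t : F := algebraMap (MvPolynomial (Fin 2) ℚ) F (MvPolynomial.X 1)

/-- A composition with (at most) `n` parts: nonzero entries only in positions `1,…,n`. -/
def IsComp (n : ℕ) (η : ℕ → ℕ) : Prop := ∀ j, η j ≠ 0 → j ∈ Finset.Icc 1 n

/-- The modulus `|η| = η_1 + ⋯ + η_n`. -/
def wt (n : ℕ) (η : ℕ → ℕ) : ℕ := ∑ j ∈ Finset.Icc 1 n, η j

/-- `l'_η(i) = #{j<i : η_j ≥ η_i} + #{j>i : η_j > η_i}`. -/
def lprime (n : ℕ) (η : ℕ → ℕ) (i : ℕ) : ℕ :=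
  ((Finset.Icc 1 n).filter fun j => j < i ∧ η i ≤ η j).card +
  ((Finset.Icc 1 n).filter fun j => i < j ∧ η i < η j).card

/-- The spectral vector `η̄` with parameters `qp, tp`: `η̄_i = qp^(η_i) tp^(-l'_η(i))`. -/
def spec (qp tp : F) (n : ℕ) (η : ℕ → ℕ) : ℕ → F := fun i =>
  qp ^ (η i) * tp ^ (-(lprime n η i : ℤ))

/-- The finitely supported function obtained from `η` by truncating outside `[1,n]`. -/
def truncFinsupp (n : ℕ) (η : ℕ → ℕ) : ℕ →₀ ℕ :=
  Finsupp.onFinset (Finset.Icc 1 n) (fun j => if j ∈ Finset.Icc 1 n then η j else 0)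
    (fun a ha => by by_contra h; simp [h] at ha)

/-- The point obtained from `z` by exchanging coordinates `i` and `j`. -/
def swapPt (i j : ℕ) (z : ℕ → F) : ℕ → F :=
  fun k => if k = i then z j else if k = j then z i else z k

/-- The transposition operator `s_i`. -/
def sOp (i : ℕ) (f : (ℕ → F) → F) : (ℕ → F) → F := fun z => f (swapPt i (i+1) z)

/-- The Hecke operator `H_i` (with Hecke parameter `tp`). -/
def HOp (tp : F) (i : ℕ) (f : (ℕ → F) → F) : (ℕ → F) → F := fun z =>
  (tp - 1) * z i / (z i - z (i+1)) * f z +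
    (z i - tp * z (i+1)) / (z i - z (i+1)) * f (swapPt i (i+1) z)

/-- The point `(z_n/q, z_1, …, z_{n-1})` (coordinates outside `[1,n]` unchanged). -/
def deltaPt (qp : F) (n : ℕ) (z : ℕ → F) : ℕ → F := fun k =>
  if k = 1 then z n / qp else if k ≤ n then z (k-1) else z k

/-- The operator `Φ = (z_n - t^{-n+1})·Δ`. -/
def PhiOp (qp tp : F) (n : ℕ) (f : (ℕ → F) → F) : (ℕ → F) → F := fun z =>
  (z n - tp ^ (1 - (n:ℤ))) * f (deltaPt qp n z)

/-- The operator product `H_a H_{a+1} ⋯ H_b` (the identity when `a > b`). -/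
def Hprod (tp : F) (a b : ℕ) (f : (ℕ → F) → F) : (ℕ → F) → F :=
  (List.range' a (b + 1 - a)).foldr (fun j g => HOp tp j g) f

/-- The operator `Z̃_i = H_i ⋯ H_{n-1} Φ H_1 ⋯ H_{i-1}`. -/
def Ztilde (qp tp : F) (n i : ℕ) (f : (ℕ → F) → F) : (ℕ → F) → F :=
  Hprod tp i (n-1) (PhiOp qp tp n (Hprod tp 1 (i-1) f))

/-- The Cherednik operator `Ξ_i = z_i⁻¹ + z_i⁻¹ H_i ⋯ H_{n-1} Φ H_1 ⋯ H_{i-1}`. -/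
def XiOp (qp tp : F) (n i : ℕ) (f : (ℕ → F) → F) : (ℕ → F) → F := fun z =>
  (z i)⁻¹ * f z + (z i)⁻¹ * Ztilde qp tp n i f z

/-- The operator product `Ξ_1 ⋯ Ξ̂_i ⋯ Ξ_n` (with `Ξ_i` omitted). -/
def XiProdOmit (qp tp : F) (n i : ℕ) (f : (ℕ → F) → F) : (ℕ → F) → F :=
  ((List.range' 1 n).filter (fun j => j ≠ i)).foldr (fun j g => XiOp qp tp n j g) f

/-- The operator `Z_i = t^{-binom(n,2)} (z_i Ξ_i - 1) Ξ_1 ⋯ Ξ̂_i ⋯ Ξ_n`. -/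
def ZOp (qp tp : F) (n i : ℕ) (f : (ℕ → F) → F) : (ℕ → F) → F := fun z =>
  tp ^ (-((n * (n-1) / 2 : ℕ) : ℤ)) *
    (z i * XiOp qp tp n i (XiProdOmit qp tp n i f) z - XiProdOmit qp tp n i f z)

/-- A `qp`-generic point: the quantities `z_i qp^a` (for `1 ≤ i ≤ n`, `a ∈ ℕ`) are
pairwise distinct.  All the rational operations occurring in the operators above are
defined at such points. -/
def Generic (qp : F) (n : ℕ) (z : ℕ → F) : Prop :=
  ∀ i ∈ Finset.Icc 1 n, ∀ j ∈ Finset.Icc 1 n, ∀ a b : ℕ,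
    (i ≠ j ∨ a ≠ b) → z i * qp ^ a ≠ z j * qp ^ b

/-- The Demazure-Lusztig operator `T_i`. -/
def TOp (tp : F) (i : ℕ) (f : (ℕ → F) → F) : (ℕ → F) → F := fun z =>
  tp * f z + (tp * z i - z (i+1)) / (z i - z (i+1)) * (f (swapPt i (i+1) z) - f z)

/-- The inverse Demazure-Lusztig operator `T_i⁻¹ = t⁻¹ - 1 + t⁻¹ T_i`. -/
def TinvOp (tp : F) (i : ℕ) (f : (ℕ → F) → F) : (ℕ → F) → F := fun z =>
  (tp⁻¹ - 1) * f z + tp⁻¹ * TOp tp i f z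

/-- The point obtained from `z` by the `q`-shift `z_1 ↦ q z_1`. -/
def tauPt (qp : F) (z : ℕ → F) : ℕ → F := fun k => if k = 1 then qp * z 1 else z k

/-- The operator `ω = s_{n-1} ⋯ s_1 τ_1`. -/
def omegaOp (qp : F) (n : ℕ) (f : (ℕ → F) → F) : (ℕ → F) → F :=
  (List.range' 1 (n-1)).foldl (fun g j => sOp j g) (fun z => f (tauPt qp z))

/-- The operator product `T_a T_{a+1} ⋯ T_b` (identity when `a > b`). -/
def Tprod (tp : F) (a b : ℕ) (f : (ℕ → F) → F) : (ℕ → F) → F :=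
  (List.range' a (b + 1 - a)).foldr (fun j g => TOp tp j g) f

/-- The operator product `T_a⁻¹ T_{a+1}⁻¹ ⋯ T_b⁻¹` (identity when `a > b`). -/
def TinvProd (tp : F) (a b : ℕ) (f : (ℕ → F) → F) : (ℕ → F) → F :=
  (List.range' a (b + 1 - a)).foldr (fun j g => TinvOp tp j g) f

/-- The Cherednik operator `Y_i = t^{-n+1} T_i ⋯ T_{n-1} ω T_1⁻¹ ⋯ T_{i-1}⁻¹`. -/
def YOp (qp tp : F) (n i : ℕ) (f : (ℕ → F) → F) : (ℕ → F) → F := fun z =>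
  tp ^ (1 - (n:ℤ)) * Tprod tp i (n-1) (omegaOp qp n (TinvProd tp 1 (i-1) f)) z

/-- Strict dominance order on compositions (restricted to the window `[1,n]`). -/
def domlt (n : ℕ) (μ η : ℕ → ℕ) : Prop :=
  (∃ i ∈ Finset.Icc 1 n, μ i ≠ η i) ∧
    ∀ p ∈ Finset.Icc 1 n, ∑ i ∈ Finset.Icc 1 p, μ i ≤ ∑ i ∈ Finset.Icc 1 p, η i

/-- `sortDesc n μ` is `μ⁺`, the decreasing rearrangement of `(μ_1,…,μ_n)` (1-based). -/
def sortDesc (n : ℕ) (μ : ℕ → ℕ) : ℕ → ℕ := fun i =>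
  ((((Finset.Icc 1 n).val.map μ).sort (· ≤ ·)).reverse).getD (i - 1) 0

/-- The partial order `≺` on compositions: `μ ≺ η` iff `μ⁺ < η⁺`, or `μ⁺ = η⁺` and `μ < η`. -/
def precOrd (n : ℕ) (μ η : ℕ → ℕ) : Prop :=
  domlt n (sortDesc n μ) (sortDesc n η) ∨
    ((∀ i ∈ Finset.Icc 1 n, sortDesc n μ i = sortDesc n η i) ∧ domlt n μ η)

/-- `P` is the nonsymmetric Macdonald polynomial `E_η(z; qp, tp)`:
it is of the monic triangular form `z^η + Σ_{ν ≺ η} b_{ην} z^ν` and satisfies the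
eigenvalue equations `Y_i P = η̄_i P` (stated at generic points). -/
def IsNSMac (qp tp : F) (n : ℕ) (η : ℕ → ℕ) (P : MvPolynomial ℕ F) : Prop :=
  P.coeff (truncFinsupp n η) = 1 ∧
  (∀ ν : ℕ →₀ ℕ, P.coeff ν ≠ 0 → ν = truncFinsupp n η ∨
    (IsComp n (fun j => ν j) ∧ wt n (fun j => ν j) = wt n η ∧ precOrd n (fun j => ν j) η)) ∧
  (∀ i ∈ Finset.Icc 1 n, ∀ z : ℕ → F, Generic qp n z →
    YOp qp tp n i (fun w => MvPolynomial.eval w P) z = spec qp tp n η i * MvPolynomial.eval z P)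

/-- `P` is the nonsymmetric interpolation Macdonald polynomial `E*_η(z;q,t)`:
a polynomial in `z_1,…,z_n` of total degree `≤ |η|`, with coefficient `1` on `z^η`,
vanishing at the spectral vectors `μ̄` of all compositions `μ ≠ η` with `|μ| ≤ |η|`. -/
def IsInterp (n : ℕ) (η : ℕ → ℕ) (P : MvPolynomial ℕ F) : Prop :=
  P.totalDegree ≤ wt n η ∧
  P.coeff (truncFinsupp n η) = 1 ∧
  (∀ ν : ℕ →₀ ℕ, P.coeff ν ≠ 0 → IsComp n (fun j => ν j)) ∧
  ∀ μ : ℕ → ℕ, IsComp n μ → wt n μ ≤ wt n η → truncFinsupp n μ ≠ truncFinsupp n η →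
    MvPolynomial.eval (spec q t n μ) P = 0

/-- The least element `t_1` of a finite set `I`. -/
def fmin (I : Finset ℕ) : ℕ := if h : I.Nonempty then I.min' h else 0

/-- The greatest element `t_s` of a finite set `I`. -/
def fmax (I : Finset ℕ) : ℕ := if h : I.Nonempty then I.max' h else 0

/-- The least element of `I` greater than `j`. -/
def succI (I : Finset ℕ) (j : ℕ) : ℕ := fmin (I.filter (fun k => j < k))

/-- The greatest element of `I` smaller than `j`. -/
def predI (I : Finset ℕ) (j : ℕ) : ℕ := fmax (I.filter (fun k => k < j))

/-- `â(x,y) = (t-1)x/(x-y)`. -/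
def ahat (tp x y : F) : F := (tp - 1) * x / (x - y)

/-- `b̂(x,y) = (x-ty)/(x-y)`. -/
def bhat (tp x y : F) : F := (x - tp * y) / (x - y)

/-- `A_I(z) = â(z_{t_s}/q, z_{t_1}) ∏_{u=1}^{s-1} â(z_{t_u}, z_{t_{u+1}})`. -/
def AI (qp tp : F) (I : Finset ℕ) (z : ℕ → F) : F :=
  ahat tp (z (fmax I) / qp) (z (fmin I)) *
    (((I.sort (· ≤ ·)).zip (I.sort (· ≤ ·)).tail).map (fun p => ahat tp (z p.1) (z p.2))).prod

/-- `B_I(z)`. -/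
def BI (qp tp : F) (n : ℕ) (I : Finset ℕ) (z : ℕ → F) : F :=
  (z (fmax I) - tp ^ (1 - (n:ℤ))) *
    (∏ j ∈ (Finset.Icc 1 n).filter (fun j => j < fmin I), bhat tp (z (fmax I) / qp) (z j)) *
    (∏ j ∈ (Finset.Icc 1 n).filter (fun j => j ∉ I ∧ fmin I < j), bhat tp (z (predI I j)) (z j))

/-- `χ_I^{(i)}(z)`. -/
def chiI (qp tp : F) (I : Finset ℕ) (i : ℕ) (z : ℕ → F) : F :=
  if i = fmin I then (ahat tp (z (fmax I) / qp) (z i))⁻¹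
  else (ahat tp (z (predI I i)) (z i))⁻¹

/-- `r_I^{(i)}(z) = χ_I^{(i)}(z) A_I(z) B_I(z)`. -/
def rI (qp tp : F) (n : ℕ) (I : Finset ℕ) (i : ℕ) (z : ℕ → F) : F :=
  chiI qp tp I i z * AI qp tp I z * BI qp tp n I z

/-- The point `Iz`. -/
def Ipt (qp : F) (I : Finset ℕ) (z : ℕ → F) : ℕ → F := fun j =>
  if j = fmin I then z (fmax I) / qp
  else if j ∈ I then z (predI I j)
  else z j

/-- `B̃_I(z)`. -/
def BtildeI (qp tp : F) (n : ℕ) (I : Finset ℕ) (z : ℕ → F) : F :=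
  (qp * z (fmin I) - tp ^ (1 - (n:ℤ))) *
    (∏ j ∈ (Finset.Icc 1 n).filter (fun j => j ∉ I ∧ j < fmax I), bhat tp (z (succI I j)) (z j)) *
    (∏ j ∈ (Finset.Icc 1 n).filter (fun j => fmax I < j), bhat tp (qp * z (fmin I)) (z j))

/-- `χ̃_I^{(i)}(z)`. -/
def chitildeI (qp tp : F) (I : Finset ℕ) (i : ℕ) (z : ℕ → F) : F :=
  if i = fmax I then z i / ahat tp (z i) (qp * z (fmin I))
  else z i / ahat tp (z i) (z (succI I i))

/-- The composition `c_I(η)`. -/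
def cIfun (I : Finset ℕ) (η : ℕ → ℕ) : ℕ → ℕ := fun j =>
  if j = fmax I then η (fmin I) + 1
  else if j ∈ I then η (succI I j)
  else η j

/-- `I` is maximal with respect to `η`. -/
def MaximalI (n : ℕ) (I : Finset ℕ) (η : ℕ → ℕ) : Prop :=
  (∀ j ∈ Finset.Icc 1 n, j ∉ I → j < fmax I → η j ≠ η (succI I j)) ∧
  (∀ j ∈ Finset.Icc 1 n, fmax I < j → η j ≠ η (fmin I) + 1)

/-- `I` is comaximal with respect to `lam`. -/
def CoMaximalI (n : ℕ) (I : Finset ℕ) (lam : ℕ → ℕ) : Prop :=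
  (∀ j ∈ Finset.Icc 1 n, j ∉ I → fmin I < j → lam j ≠ lam (predI I j)) ∧
  (∀ j ∈ Finset.Icc 1 n, j < fmin I → lam j ≠ lam (fmax I) - 1) ∧
  lam (fmax I) ≠ 0

/-- `J^I_η`: the collection of nonempty subsets of `{1,…,n}` maximal with respect to `η`. -/
def Jset (n : ℕ) (η : ℕ → ℕ) : Finset (Finset ℕ) :=
  (Finset.Icc 1 n).powerset.filter (fun I => I.Nonempty ∧ MaximalI n I η)

/-- The arm length `a_η(i,j) = η_i - j`. -/
def armF (η : ℕ → ℕ) (i j : ℕ) : ℕ := η i - j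

/-- The leg length `l_η(i,j)`. -/
def legF (n : ℕ) (η : ℕ → ℕ) (i j : ℕ) : ℕ :=
  ((Finset.Icc 1 n).filter fun k => i < k ∧ j ≤ η k ∧ η k ≤ η i).card +
  ((Finset.Icc 1 n).filter fun k => k < i ∧ j ≤ η k + 1 ∧ η k + 1 ≤ η i).card

/-- `d'_η(qp,tp) = ∏_{s ∈ diag(η)} (1 - qp^{a_η(s)+1} tp^{l_η(s)})`. -/
def dprime (qp tp : F) (n : ℕ) (η : ℕ → ℕ) : F :=
  ∏ i ∈ Finset.Icc 1 n, ∏ j ∈ Finset.Icc 1 (η i),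
    (1 - qp ^ (armF η i j + 1) * tp ^ (legF n η i j))

/-- `k_η = (∏_i η̄_i^{η_i}) d'_η(q⁻¹,t⁻¹)`. -/
def kconst (n : ℕ) (η : ℕ → ℕ) : F :=
  (∏ i ∈ Finset.Icc 1 n, spec q t n η i ^ (η i)) * dprime q⁻¹ t⁻¹ n η

/-- The Pieri coefficient `a_{η,c_I(η)}`. -/
def acoef (n : ℕ) (η : ℕ → ℕ) (I : Finset ℕ) : F :=
  -((q - 1) * dprime q⁻¹ t⁻¹ n η * AI q t I (spec q t n η) * BtildeI q t n I (spec q t n η)) /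
    (q ^ (η (fmin I) + 1) * (t - 1) * dprime q⁻¹ t⁻¹ n (cIfun I η))

/-- The tuples `(v_1,…,v_n)` of nonnegative integers with `v_1 + ⋯ + v_n = m`. -/
def compTuples (n m : ℕ) : Finset (Fin n → ℕ) :=
  (Fintype.piFinset fun _ => Finset.range (m + 1)).filter (fun v => ∑ i, v i = m)

/-- The (1-based) composition associated with a tuple `v : Fin n → ℕ`. -/
def ofFin (n : ℕ) (v : Fin n → ℕ) : ℕ → ℕ := fun j =>
  if h : 1 ≤ j ∧ j - 1 < n then v ⟨j - 1, h.2⟩ else 0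

/- ===== auxiliary lemmas ===== -/

lemma t_ne_zero' : t ≠ 0 := fun h =>
  MvPolynomial.X_ne_zero (R := ℚ) 1
    (IsFractionRing.injective (MvPolynomial (Fin 2) ℚ) F (by rw [map_zero]; exact h))

lemma q_ne_zero' : q ≠ 0 := fun h =>
  MvPolynomial.X_ne_zero (R := ℚ) 0
    (IsFractionRing.injective (MvPolynomial (Fin 2) ℚ) F (by rw [map_zero]; exact h))

lemma bhat_zero (x y : F) (h : x = t * y) : bhat t x y = 0 := by
  simp [bhat, h]

lemma fmin_mem {I : Finset ℕ} (hne : I.Nonempty) : fmin I ∈ I := by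
  rw [fmin, dif_pos hne]; exact I.min'_mem hne

lemma fmin_le {I : Finset ℕ} {k : ℕ} (hk : k ∈ I) : fmin I ≤ k := by
  rw [fmin, dif_pos ⟨k, hk⟩]; exact I.min'_le k hk

lemma fmax_mem {I : Finset ℕ} (hne : I.Nonempty) : fmax I ∈ I := by
  rw [fmax, dif_pos hne]; exact I.max'_mem hne

lemma le_fmax {I : Finset ℕ} {k : ℕ} (hk : k ∈ I) : k ≤ fmax I := by
  rw [fmax, dif_pos ⟨k, hk⟩]; exact I.le_max' k hk

lemma predI_spec (I : Finset ℕ) (j : ℕ) (h : ∃ k ∈ I, k < j) :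
    predI I j ∈ I ∧ predI I j < j ∧ ∀ k ∈ I, k < j → k ≤ predI I j := by
  obtain ⟨k0, hk0I, hk0⟩ := h
  have hne : (I.filter (fun k => k < j)).Nonempty := ⟨k0, Finset.mem_filter.2 ⟨hk0I, hk0⟩⟩
  have h1 := fmax_mem hne
  rw [Finset.mem_filter] at h1
  exact ⟨h1.1, h1.2, fun k hk hkj => le_fmax (Finset.mem_filter.2 ⟨hk, hkj⟩)⟩

lemma predI_of_gt_fmax (I : Finset ℕ) (k : ℕ) (h : fmax I < k) : predI I k = fmax I := by
  have : I.filter (fun x => x < k) = I :=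
    Finset.filter_eq_self.2 fun x hx => lt_of_le_of_lt (le_fmax hx) h
  rw [predI, this]

lemma lprime_sum (n : ℕ) (lam : ℕ → ℕ) (c : ℕ) :
    lprime n lam c = ∑ k ∈ Finset.Icc 1 n,
      (((if k < c ∧ lam c ≤ lam k then 1 else 0) : ℕ) +
        (if c < k ∧ lam c < lam k then 1 else 0)) := by
  rw [lprime, Finset.card_filter, Finset.card_filter, ← Finset.sum_add_distrib]

lemma lprime_succ_of_pointwise (n : ℕ) (lam : ℕ → ℕ) (a b : ℕ) (hb : b ∈ Finset.Icc 1 n)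
    (hpt : ∀ k ∈ Finset.Icc 1 n,
      (((if k < a ∧ lam a ≤ lam k then 1 else 0) : ℕ) +
        (if a < k ∧ lam a < lam k then 1 else 0))
        = (((if k < b ∧ lam b ≤ lam k then 1 else 0) : ℕ) +
            (if b < k ∧ lam b < lam k then 1 else 0))
          + (if k = b then 1 else 0)) :
    lprime n lam a = lprime n lam b + 1 := by
  rw [lprime_sum, lprime_sum, Finset.sum_congr rfl hpt, Finset.sum_add_distrib]
  congr 1
  rw [Finset.sum_ite_eq' (Finset.Icc 1 n) b (fun _ => (1 : ℕ)), if_pos hb]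

lemma spec_eq_t_mul (n : ℕ) (lam : ℕ → ℕ) (a b : ℕ) (hv : lam a = lam b)
    (hl : lprime n lam a = lprime n lam b + 1) :
    spec q t n lam b = t * spec q t n lam a := by
  rw [spec, spec, hv, hl]
  have ht := t_ne_zero'
  rw [show (-((lprime n lam b + 1 : ℕ) : ℤ)) = (-(lprime n lam b : ℤ)) + (-1) by push_cast; ring,
    zpow_add₀ ht, zpow_neg_one]
  field_simp

lemma spec_div_q_eq_t_mul (n : ℕ) (lam : ℕ → ℕ) (a b : ℕ) (hv : lam a + 1 = lam b)
    (hl : lprime n lam a = lprime n lam b + 1) :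
    spec q t n lam b / q = t * spec q t n lam a := by
  rw [spec, spec, ← hv, hl, pow_succ]
  have ht := t_ne_zero'
  have hq := q_ne_zero'
  rw [show (-((lprime n lam b + 1 : ℕ) : ℤ)) = (-(lprime n lam b : ℤ)) + (-1) by push_cast; ring,
    zpow_add₀ ht, zpow_neg_one]
  field_simp

lemma exists_min {P : ℕ → Prop} (h : ∃ j, P j) : ∃ j, P j ∧ ∀ k < j, ¬ P k := by
  classical
  exact ⟨Nat.find h, Nat.find_spec h, fun k hk => Nat.find_min h hk⟩

lemma lprime_succ_A (n : ℕ) (lam : ℕ → ℕ) (a b : ℕ) (hb : b ∈ Finset.Icc 1 n)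
    (hba : b < a) (hv : lam a = lam b)
    (hno : ∀ k ∈ Finset.Icc 1 n, b < k → k < a → lam k ≠ lam a) :
    lprime n lam a = lprime n lam b + 1 := by
  apply lprime_succ_of_pointwise n lam a b hb
  intro k hk
  by_cases hka : k = a
  · subst hka; split_ifs <;> omega
  by_cases hkb : k = b
  · subst hkb; split_ifs <;> omega
  by_cases hmid : b < k ∧ k < a
  · have := hno k hk hmid.1 hmid.2
    split_ifs <;> omega
  · split_ifs <;> omega

lemma lprime_succ_B (n : ℕ) (lam : ℕ → ℕ) (a b : ℕ) (hb : b ∈ Finset.Icc 1 n)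
    (hab : a < b) (hv : lam a + 1 = lam b)
    (hlt : ∀ k ∈ Finset.Icc 1 n, k < a → lam k ≠ lam a)
    (hgt : ∀ k ∈ Finset.Icc 1 n, b < k → lam k ≠ lam b) :
    lprime n lam a = lprime n lam b + 1 := by
  apply lprime_succ_of_pointwise n lam a b hb
  intro k hk
  by_cases hka : k = a
  · subst hka; split_ifs <;> omega
  by_cases hkb : k = b
  · subst hkb; split_ifs <;> omega
  by_cases h1 : k < a
  · have := hlt k hk h1
    split_ifs <;> omega
  · by_cases h2 : b < k
    · have := hgt k hk h2
      split_ifs <;> omega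
    · split_ifs <;> omega

lemma BI_zero_A (n : ℕ) (lam : ℕ → ℕ) (I : Finset ℕ) (hI : I ⊆ Finset.Icc 1 n)
    (hne : I.Nonempty)
    (hA : ∃ j ∈ Finset.Icc 1 n, j ∉ I ∧ fmin I < j ∧ lam j = lam (predI I j)) :
    BI q t n I (spec q t n lam) = 0 := by
  have hex : ∃ j, j ∈ Finset.Icc 1 n ∧ j ∉ I ∧ fmin I < j ∧ lam j = lam (predI I j) := by
    obtain ⟨j, h1, h2, h3, h4⟩ := hA; exact ⟨j, h1, h2, h3, h4⟩
  obtain ⟨j, ⟨hjn, hjI, hjm, hjv⟩, hmin⟩ := exists_min hex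
  obtain ⟨hpI, hpj, hpmax⟩ := predI_spec I j ⟨fmin I, fmin_mem hne, hjm⟩
  have hpn := hI hpI
  rw [Finset.mem_Icc] at hpn
  have hjn' := hjn
  rw [Finset.mem_Icc] at hjn'
  have hno : ∀ k ∈ Finset.Icc 1 n, predI I j < k → k < j → lam k ≠ lam j := by
    intro k hk hpk hkj hlk
    have hkI : k ∉ I := fun h => absurd (hpmax k h hkj) (by omega)
    have hpk' : predI I k = predI I j := by
      obtain ⟨h1, h2, h3⟩ := predI_spec I k ⟨predI I j, hpI, hpk⟩
      have h4 := hpmax _ h1 (h2.trans hkj)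
      have h5 := h3 _ hpI hpk
      omega
    exact hmin k hkj ⟨hk, hkI, lt_of_le_of_lt (fmin_le hpI) hpk, by rw [hpk']; exact hlk.trans hjv⟩
  have hl : lprime n lam j = lprime n lam (predI I j) + 1 :=
    lprime_succ_A n lam j (predI I j) (hI hpI) hpj hjv hno
  have hfac : bhat t (spec q t n lam (predI I j)) (spec q t n lam j) = 0 :=
    bhat_zero _ _ (spec_eq_t_mul n lam j (predI I j) hjv hl)
  have h0 : ∏ jj ∈ (Finset.Icc 1 n).filter (fun jj => jj ∉ I ∧ fmin I < jj),
      bhat t (spec q t n lam (predI I jj)) (spec q t n lam jj) = 0 :=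
    Finset.prod_eq_zero (Finset.mem_filter.2 ⟨hjn, hjI, hjm⟩) hfac
  rw [BI, h0, mul_zero]

lemma BI_zero_B (n : ℕ) (lam : ℕ → ℕ) (I : Finset ℕ) (hI : I ⊆ Finset.Icc 1 n)
    (hne : I.Nonempty)
    (hA : ∀ j ∈ Finset.Icc 1 n, j ∉ I → fmin I < j → lam j ≠ lam (predI I j))
    (hC : lam (fmax I) ≠ 0)
    (hB : ∃ j ∈ Finset.Icc 1 n, j < fmin I ∧ lam j = lam (fmax I) - 1) :
    BI q t n I (spec q t n lam) = 0 := by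
  have hmI := fmax_mem hne
  have hmn := hI hmI
  have hmn' := hmn
  rw [Finset.mem_Icc] at hmn'
  have hex : ∃ j, j ∈ Finset.Icc 1 n ∧ j < fmin I ∧ lam j + 1 = lam (fmax I) := by
    obtain ⟨j, h1, h2, h3⟩ := hB; exact ⟨j, h1, h2, by omega⟩
  obtain ⟨j, ⟨hjn, hjm, hjv⟩, hmin⟩ := exists_min hex
  have hjn' := hjn
  rw [Finset.mem_Icc] at hjn'
  have hjltm : j < fmax I := lt_of_lt_of_le hjm (fmin_le hmI)
  have hgt : ∀ k ∈ Finset.Icc 1 n, fmax I < k → lam k ≠ lam (fmax I) := by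
    intro k hk hmk
    have hk' := hk
    rw [Finset.mem_Icc] at hk'
    have hkI : k ∉ I := fun h => absurd (le_fmax h) (by omega)
    have := hA k hk hkI (lt_of_le_of_lt (fmin_le hmI) hmk)
    rwa [predI_of_gt_fmax I k hmk] at this
  have hlt : ∀ k ∈ Finset.Icc 1 n, k < j → lam k ≠ lam j := by
    intro k hk h2 hlk
    have hk' := hk
    rw [Finset.mem_Icc] at hk'
    exact hmin k h2 ⟨hk, by omega, by omega⟩
  have hl : lprime n lam j = lprime n lam (fmax I) + 1 :=
    lprime_succ_B n lam j (fmax I) hmn hjltm hjv hlt hgt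
  have hfac : bhat t (spec q t n lam (fmax I) / q) (spec q t n lam j) = 0 :=
    bhat_zero _ _ (spec_div_q_eq_t_mul n lam j (fmax I) hjv hl)
  have h0 : ∏ jj ∈ (Finset.Icc 1 n).filter (fun jj => jj < fmin I),
      bhat t (spec q t n lam (fmax I) / q) (spec q t n lam jj) = 0 :=
    Finset.prod_eq_zero (Finset.mem_filter.2 ⟨hjn, hjm⟩) hfac
  rw [BI, h0, mul_zero, zero_mul]

lemma BI_zero_C (n : ℕ) (hn : 1 ≤ n) (lam : ℕ → ℕ) (I : Finset ℕ) (hI : I ⊆ Finset.Icc 1 n)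
    (hne : I.Nonempty)
    (hA : ∀ j ∈ Finset.Icc 1 n, j ∉ I → fmin I < j → lam j ≠ lam (predI I j))
    (hC : lam (fmax I) = 0) :
    BI q t n I (spec q t n lam) = 0 := by
  have hmI := fmax_mem hne
  have hmn := hI hmI
  have hmn' := hmn
  rw [Finset.mem_Icc] at hmn'
  have hgt : ∀ k, fmax I < k → k ≤ n → lam k ≠ 0 := by
    intro k hmk hkn
    have hkI : k ∉ I := fun h => absurd (le_fmax h) (by omega)
    have := hA k (Finset.mem_Icc.2 ⟨by omega, hkn⟩) hkI (lt_of_le_of_lt (fmin_le hmI) hmk)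
    rwa [predI_of_gt_fmax I k hmk, hC] at this
  have hl : lprime n lam (fmax I) + 1 = n := by
    rw [lprime_sum]
    have hpt : ∀ k ∈ Finset.Icc 1 n,
        (((if k < fmax I ∧ lam (fmax I) ≤ lam k then 1 else 0) : ℕ) +
          (if fmax I < k ∧ lam (fmax I) < lam k then 1 else 0)) = (if k = fmax I then 0 else 1) := by
      intro k hk
      rw [Finset.mem_Icc] at hk
      by_cases h2 : fmax I < k
      · have := hgt k h2 hk.2
        split_ifs <;> omega
      · split_ifs <;> omega
    rw [Finset.sum_congr rfl hpt]
    have h2 : (∑ k ∈ Finset.Icc 1 n, ((if k = fmax I then 0 else 1) : ℕ))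
        + (∑ k ∈ Finset.Icc 1 n, ((if k = fmax I then 1 else 0) : ℕ)) = n := by
      rw [← Finset.sum_add_distrib]
      have hone : ∀ k ∈ Finset.Icc 1 n,
          (((if k = fmax I then 0 else 1) : ℕ) + (if k = fmax I then 1 else 0)) = 1 := by
        intro k _; split_ifs <;> rfl
      rw [Finset.sum_congr rfl hone, Finset.sum_const, smul_eq_mul, mul_one, Nat.card_Icc]
      omega
    have h3 : (∑ k ∈ Finset.Icc 1 n, ((if k = fmax I then 1 else 0) : ℕ)) = 1 := by
      rw [Finset.sum_ite_eq' (Finset.Icc 1 n) (fmax I) (fun _ => (1:ℕ)), if_pos hmn]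
    omega
  have hz : spec q t n lam (fmax I) = t ^ (1 - (n:ℤ)) := by
    rw [spec, hC, pow_zero, one_mul]
    congr 1
    omega
  rw [BI, hz, sub_self, zero_mul, zero_mul]

/-- Proposition 4: if `I` is not comaximal with respect to `λ`
then `r_I^{(i)}(λ̄) = 0`, whenever no denominator of `r_I^{(i)}` vanishes at `λ̄`
(the nonvanishing hypotheses `hd1`, `hd2`). -/
theorem rI_vanishes_of_not_comaximal (n : ℕ) (hn : 2 ≤ n)
    (lam : ℕ → ℕ) (hlam : IsComp n lam)
    (I : Finset ℕ) (hI : I ⊆ Finset.Icc 1 n) (hne : I.Nonempty)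
    (i : ℕ) (hiI : i ∈ I)
    (hd1 : ∀ a ∈ Finset.Icc 1 n, ∀ b ∈ Finset.Icc 1 n, a ≠ b →
      spec q t n lam a ≠ spec q t n lam b)
    (hd2 : ∀ b ∈ Finset.Icc 1 n, spec q t n lam (fmax I) / q ≠ spec q t n lam b)
    (hcm : ¬ CoMaximalI n I lam) :
    rI q t n I i (spec q t n lam) = 0 := by
  have hBI : BI q t n I (spec q t n lam) = 0 := by
    by_cases hA : ∀ j ∈ Finset.Icc 1 n, j ∉ I → fmin I < j → lam j ≠ lam (predI I j)
    · by_cases hC : lam (fmax I) = 0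
      · exact BI_zero_C n (by omega) lam I hI hne hA hC
      · have hB : ∃ j ∈ Finset.Icc 1 n, j < fmin I ∧ lam j = lam (fmax I) - 1 := by
          by_contra hB
          push_neg at hB
          exact hcm ⟨hA, hB, hC⟩
        exact BI_zero_B n lam I hI hne hA hC hB
    · push_neg at hA
      exact BI_zero_A n lam I hI hne hA
  rw [rI, hBI, mul_zero]
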